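/- For integers r >= 2 and t >= 0, the discriminant of the polynomial p_{r,t}(x) = sum_{j=0}^{r} C(t+j, j) x^j equals (-1)^{r(r-1)/2} * (t+1)^{r-1} * (t+r+1)^{r-1} * ((t+2)(t+3)...(t+r))^{r-2} / (r!)^{r-2}. -/

import Mathlib

open Polynomial

/-- The Sylvester matrix of a polynomial `f` of degree `r` and its derivative `f'`,
whose determinant is the resultant `Res(f, f')`.  The first `r - 1` rows contain shifted
copies of the coefficients of `f` (in descending order) and the last `r` rows contain
shifted copies of the coefficients of `f'`. -/
noncomputable def sylvesterWithDeriv (r : ℕ) (f : Polynomial ℚ) :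
    Matrix (Fin (2 * r - 1)) (Fin (2 * r - 1)) ℚ :=
  fun i j =>
    if (i : ℕ) < r - 1 then
      if (i : ℕ) ≤ (j : ℕ) ∧ (j : ℕ) ≤ (i : ℕ) + r then f.coeff (r + (i : ℕ) - (j : ℕ)) else 0
    else
      if (i : ℕ) - (r - 1) ≤ (j : ℕ) ∧ (j : ℕ) ≤ (i : ℕ) then
        (Polynomial.derivative f).coeff (r - 1 + ((i : ℕ) - (r - 1)) - (j : ℕ))
      else 0

/-- `Res(f, f')` for a polynomial of degree `r`. -/
noncomputable def resWithDeriv (r : ℕ) (f : Polynomial ℚ) : ℚ :=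
  (sylvesterWithDeriv r f).det

/-- The truncated binomial polynomial `p_{r,t}(x) = ∑_{j=0}^r C(t+j, j) x^j`. -/
noncomputable def pPoly (r t : ℕ) : Polynomial ℚ :=
  ∑ j ∈ Finset.range (r + 1), Polynomial.C (Nat.choose (t + j) j : ℚ) * Polynomial.X ^ j

open Finset Equiv

lemma coeff_pPoly (r t m : ℕ) :
    (pPoly r t).coeff m = if m ≤ r then ((t + m).choose m : ℚ) else 0 := by
  rw [pPoly, Polynomial.finset_sum_coeff]
  simp only [Polynomial.coeff_C_mul, Polynomial.coeff_X_pow, mul_ite, mul_one, mul_zero]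
  rw [Finset.sum_ite_eq (Finset.range (r+1)) m]
  simp [Nat.lt_succ_iff]

lemma coeff_deriv_pPoly (r t m : ℕ) :
    (Polynomial.derivative (pPoly r t)).coeff m =
      if m + 1 ≤ r then ((m : ℚ) + 1) * ((t + m + 1).choose (m+1) : ℚ) else 0 := by
  rw [Polynomial.coeff_derivative, coeff_pPoly]
  split_ifs with h
  · push_cast; ring
  · simp

lemma key_binom (t m : ℕ) :
    ((m : ℚ) + 1) * ((t + m + 1).choose (m+1) : ℚ) = ((t:ℚ) + m + 1) * ((t + m).choose m : ℚ) := by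
  have h := Nat.add_one_mul_choose_eq (t + m) m
  have h2 : ((t + m + 1) * Nat.choose (t+m) m : ℚ) = ((Nat.choose (t+m+1) (m+1) * (m+1) : ℕ) : ℚ) := by
    rw [← h]; push_cast [Nat.succ_eq_add_one]; ring
  push_cast at h2 ⊢
  linarith [h2]

noncomputable def sylN (r : ℕ) (f : Polynomial ℚ) (i j : ℕ) : ℚ :=
  if i < r - 1 then
    if i ≤ j ∧ j ≤ i + r then f.coeff (r + i - j) else 0
  else
    if i - (r - 1) ≤ j ∧ j ≤ i then
      (Polynomial.derivative f).coeff (r - 1 + (i - (r - 1)) - j)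
    else 0

set_option maxHeartbeats 2000000 in

lemma syl_eq_sylN (r : ℕ) (f : Polynomial ℚ) (i j : Fin (2*r-1)) :
    sylvesterWithDeriv r f i j = sylN r f (i : ℕ) (j : ℕ) := rfl


set_option maxHeartbeats 2000000 in
lemma rowrel (r t : ℕ) (hr : 2 ≤ r) (k : ℕ) (hk : k ≤ r - 2) (j : ℕ) :
    sylN r (pPoly r t) (2*r-2-k) j - sylN r (pPoly r t) (2*r-3-k) j
      - ((t:ℚ)+1) * sylN r (pPoly r t) (r-2-k) j
    = if j = r-2-k then -(((t:ℚ)+(r:ℚ)+1) * ((t+r).choose r : ℚ)) else 0 := by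
  have h1 : ¬ (2*r-2-k < r - 1) := by omega
  have h2 : ¬ (2*r-3-k < r - 1) := by omega
  have h3 : r-2-k < r - 1 := by omega
  rw [sylN, sylN, sylN, if_neg h1, if_neg h2, if_pos h3]
  have e1 : 2*r-2-k - (r-1) = r-1-k := by omega
  have e2 : 2*r-3-k - (r-1) = r-2-k := by omega
  rw [e1, e2]
  have e3 : r - 1 + (r-1-k) = 2*r-2-k := by omega
  have e4 : r - 1 + (r-2-k) = 2*r-3-k := by omega
  rw [e3, e4]
  -- now case on j
  rcases lt_trichotomy j (r-2-k) with hj | hj | hj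
  · rw [if_neg (by omega), if_neg (by omega), if_neg (by omega), if_neg (by omega)]
    ring
  · subst hj
    rw [if_neg (by omega), if_pos (by omega), if_pos (by omega), if_pos (by omega)]
    have e5 : 2*r-3-k - (r-2-k) = r - 1 := by omega
    have e6 : r + (r-2-k) - (r-2-k) = r := by omega
    rw [e5, e6, coeff_deriv_pPoly, coeff_pPoly, if_pos (by omega), if_pos (by omega)]
    have e7 : r - 1 + 1 = r := by omega
    rw [e7]
    have : ((r:ℚ) - 1 + 1) = (r:ℚ) := by ring
    have hcast : ((r - 1 : ℕ) : ℚ) = (r:ℚ) - 1 := by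
      have : 1 ≤ r := by omega
      push_cast [this]; ring
    rw [hcast]
    have e8 : t + (r-1) + 1 = t + r := by omega
    rw [e8]
    ring
  · rcases le_or_gt j (2*r-3-k) with hj2 | hj2
    · -- middle range: r-1-k ≤ j ≤ 2r-3-k
      rw [if_pos (by omega), if_pos (by omega), if_pos (by omega)]
      set m : ℕ := 2*r-2-k-j with hm
      have hm1 : 1 ≤ m := by omega
      have hm2 : m ≤ r - 1 := by omega
      have e5 : 2*r-3-k-j = m - 1 := by omega
      have e6 : r + (r-2-k) - j = m := by omega
      rw [e5, e6, coeff_deriv_pPoly, coeff_deriv_pPoly, coeff_pPoly,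
        if_pos (by omega), if_pos (by omega), if_pos (by omega)]
      have e7 : m - 1 + 1 = m := by omega
      have e8 : t + (m-1) + 1 = t + m := by omega
      rw [e7, e8]
      have hcast : ((m - 1 : ℕ) : ℚ) = (m:ℚ) - 1 := by push_cast [hm1]; ring
      rw [hcast]
      have hk1 := key_binom t m
      have hk2 := key_binom t (m-1)
      rw [hcast, e7, e8] at hk2
      rw [if_neg (by omega)]
      nlinarith [hk1, hk2]
    · -- j ≥ 2r-2-k
      rcases le_or_gt j (2*r-2-k) with hj3 | hj3
      · have hj4 : j = 2*r-2-k := by omega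
        subst hj4
        rw [if_pos (by omega), if_neg (by omega), if_pos (by omega)]
        have e5 : 2*r-2-k - (2*r-2-k) = 0 := by omega
        have e6 : r + (r-2-k) - (2*r-2-k) = 0 := by omega
        rw [e5, e6, coeff_deriv_pPoly, coeff_pPoly, if_pos (by omega), if_pos (by omega)]
        rw [if_neg (by omega)]
        norm_num
      · have c1 : ¬(r-1-k ≤ j ∧ j ≤ 2*r-2-k) := by omega
        have c2 : ¬(r-2-k ≤ j ∧ j ≤ 2*r-3-k) := by omega
        have c3 : ¬(r-2-k ≤ j ∧ j ≤ r-2-k + r) := by omega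
        have c4 : ¬(j = r-2-k) := by omega
        rw [if_neg c1, if_neg c2, if_neg c3, if_neg c4]
        ring

noncomputable def rowOps (r t : ℕ) (hr : 2 ≤ r) : ℕ → Matrix (Fin (2*r-1)) (Fin (2*r-1)) ℚ
  | 0 => sylvesterWithDeriv r (pPoly r t)
  | (k+1) =>
      let A := rowOps r t hr k
      let i0 : Fin (2*r-1) := ⟨2*r-2-k, by omega⟩
      let i1 : Fin (2*r-1) := ⟨2*r-3-k, by omega⟩
      let i2 : Fin (2*r-1) := ⟨r-2-k, by omega⟩
      let B1 := A.updateRow i0 (A i0 + (-1 : ℚ) • A i1)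
      B1.updateRow i0 (B1 i0 + (-((t:ℚ)+1)) • B1 i2)

lemma rowOps_det (r t : ℕ) (hr : 2 ≤ r) (k : ℕ) (hk : k ≤ r-1) :
    (rowOps r t hr k).det = (sylvesterWithDeriv r (pPoly r t)).det := by
  induction k with
  | zero => rfl
  | succ k ih =>
    rw [rowOps]
    have hk2 : k ≤ r - 2 := by omega
    have h01 : (⟨2*r-2-k, by omega⟩ : Fin (2*r-1)) ≠ ⟨2*r-3-k, by omega⟩ := by
      simp only [ne_eq, Fin.mk.injEq]; omega
    have h02 : (⟨2*r-2-k, by omega⟩ : Fin (2*r-1)) ≠ ⟨r-2-k, by omega⟩ := by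
      simp only [ne_eq, Fin.mk.injEq]; omega
    rw [Matrix.det_updateRow_add_smul_self _ h02, Matrix.det_updateRow_add_smul_self _ h01]
    exact ih (by omega)

lemma rowOps_apply (r t : ℕ) (hr : 2 ≤ r) (k : ℕ) : k ≤ r-1 → ∀ (i j : Fin (2*r-1)),
    rowOps r t hr k i j =
      if 2*r-1-k ≤ (i : ℕ) then
        (if (j:ℕ) = (i:ℕ) - r then -(((t:ℚ)+(r:ℚ)+1) * ((t+r).choose r : ℚ)) else 0)
      else sylN r (pPoly r t) (i:ℕ) (j:ℕ) := by
  induction k with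
  | zero =>
    intro _ i j
    rw [if_neg (by omega : ¬ 2*r-1-0 ≤ (i:ℕ))]
    rfl
  | succ k ih =>
    intro hk i j
    have hk2 : k ≤ r - 2 := by omega
    rw [rowOps]
    set i0 : Fin (2*r-1) := ⟨2*r-2-k, by omega⟩ with hi0
    set i1 : Fin (2*r-1) := ⟨2*r-3-k, by omega⟩ with hi1
    set i2 : Fin (2*r-1) := ⟨r-2-k, by omega⟩ with hi2
    have h20 : i2 ≠ i0 := by simp only [hi0, hi2, ne_eq, Fin.mk.injEq]; omega
    by_cases hi : i = i0
    · subst hi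
      rw [Matrix.updateRow_self]
      simp only [Matrix.updateRow_self, Matrix.updateRow_ne h20, Pi.add_apply, Pi.smul_apply,
        smul_eq_mul]
      rw [ih (by omega) i0 j, ih (by omega) i1 j, ih (by omega) i2 j]
      rw [if_neg (show ¬ 2*r-1-k ≤ ((i0:Fin (2*r-1)):ℕ) by simp only [hi0]; omega),
        if_neg (show ¬ 2*r-1-k ≤ ((i1:Fin (2*r-1)):ℕ) by simp only [hi1]; omega),
        if_neg (show ¬ 2*r-1-k ≤ ((i2:Fin (2*r-1)):ℕ) by simp only [hi2]; omega)]
      rw [if_pos (show 2*r-1-(k+1) ≤ ((i0:Fin (2*r-1)):ℕ) by simp only [hi0]; omega)]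
      have hval : ((i0 : Fin (2*r-1)) : ℕ) = 2*r-2-k := rfl
      have hval1 : ((i1 : Fin (2*r-1)) : ℕ) = 2*r-3-k := rfl
      have hval2 : ((i2 : Fin (2*r-1)) : ℕ) = r-2-k := rfl
      have hsub : 2*r-2-k - r = r-2-k := by omega
      simp only [hval, hval1, hval2, hsub]
      linear_combination rowrel r t hr k hk2 (j:ℕ)
    · rw [Matrix.updateRow_ne hi, Matrix.updateRow_ne hi]
      rw [ih (by omega) i j]
      have hne : (i:ℕ) ≠ 2*r-2-k := fun h => hi (Fin.ext (by simpa [hi0] using h))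
      by_cases hge : 2*r-1-k ≤ (i:ℕ)
      · rw [if_pos hge, if_pos (show 2*r-1-(k+1) ≤ (i:ℕ) by omega)]
      · rw [if_neg hge, if_neg (show ¬ 2*r-1-(k+1) ≤ (i:ℕ) by omega)]

def swapk (r : ℕ) (hr : 2 ≤ r) (k : ℕ) : Equiv.Perm (Fin (2*r-1)) :=
  if h : k < r - 1 then Equiv.swap ⟨k, by omega⟩ ⟨k+r, by omega⟩ else 1

def pprod (r : ℕ) (hr : 2 ≤ r) (m : ℕ) : Equiv.Perm (Fin (2*r-1)) :=
  ((List.range m).map (swapk r hr)).prod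

lemma pprod_succ (r : ℕ) (hr : 2 ≤ r) (m : ℕ) :
    pprod r hr (m+1) = pprod r hr m * swapk r hr m := by
  rw [pprod, List.range_succ, List.map_append, List.prod_append]
  simp [pprod]

lemma pprod_apply (r : ℕ) (hr : 2 ≤ r) (m : ℕ) : m ≤ r-1 → ∀ (i : Fin (2*r-1)),
    ((pprod r hr m i : Fin (2*r-1)) : ℕ) =
      if (i:ℕ) < m then (i:ℕ) + r
      else if r ≤ (i:ℕ) ∧ (i:ℕ) < r + m then (i:ℕ) - r
      else (i:ℕ) := by
  induction m with
  | zero =>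
    intro _ i
    simp only [pprod, List.range_zero, List.map_nil, List.prod_nil, Equiv.Perm.one_apply]
    rw [if_neg (by omega), if_neg (by omega)]
  | succ m ih =>
    intro hm i
    have hm2 : m ≤ r - 1 := by omega
    have hmr : m < r - 1 := by omega
    rw [pprod_succ, Equiv.Perm.mul_apply, swapk, dif_pos hmr, Equiv.swap_apply_def]
    set a : Fin (2*r-1) := ⟨m, by omega⟩ with hadef
    set b : Fin (2*r-1) := ⟨m+r, by omega⟩ with hbdef
    have ha : (a : ℕ) = m := rfl
    have hb : (b : ℕ) = m + r := rfl
    by_cases h1 : i = a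
    · rw [if_pos h1, ih hm2 b, hb]
      rw [if_neg (by omega), if_neg (by omega)]
      have hi : (i : ℕ) = m := by rw [h1]
      simp only [hi]
      rw [if_pos (by omega)]
    · rw [if_neg h1]
      by_cases h2 : i = b
      · rw [if_pos h2, ih hm2 a, ha]
        rw [if_neg (by omega), if_neg (by omega)]
        have hi : (i : ℕ) = m + r := by rw [h2]
        simp only [hi]
        rw [if_neg (by omega), if_pos (by omega)]
        omega
      · rw [if_neg h2, ih hm2 i]
        have hv1 : (i : ℕ) ≠ m := fun h => h1 (Fin.ext (h.trans ha.symm))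
        have hv2 : (i : ℕ) ≠ m + r := fun h => h2 (Fin.ext (h.trans hb.symm))
        by_cases c1 : (i:ℕ) < m
        · rw [if_pos c1, if_pos (show (i:ℕ) < m+1 by omega)]
        · rw [if_neg c1]
          by_cases c2 : r ≤ (i:ℕ) ∧ (i:ℕ) < r + m
          · rw [if_pos c2, if_neg (show ¬ (i:ℕ) < m+1 by omega),
              if_pos (show r ≤ (i:ℕ) ∧ (i:ℕ) < r + (m+1) by omega)]
          · rw [if_neg c2, if_neg (show ¬ (i:ℕ) < m+1 by omega),
              if_neg (show ¬ (r ≤ (i:ℕ) ∧ (i:ℕ) < r + (m+1)) by omega)]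

lemma pprod_sign (r : ℕ) (hr : 2 ≤ r) :
    Equiv.Perm.sign (pprod r hr (r-1)) = (-1)^(r-1) := by
  rw [pprod, ← List.prod_hom _ (Equiv.Perm.sign), List.map_map]
  have h : (List.range (r-1)).map (⇑Equiv.Perm.sign ∘ swapk r hr)
      = List.replicate (r-1) (-1) := by
    apply List.eq_replicate_iff.2
    constructor
    · simp
    · intro x hx
      simp only [List.mem_map, List.mem_range] at hx
      obtain ⟨k, hk, rfl⟩ := hx
      simp only [Function.comp_apply, swapk, dif_pos hk]
      apply Equiv.Perm.sign_swap
      simp only [ne_eq, Fin.mk.injEq]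
      omega
  rw [h, List.prod_replicate]

-- ENTRY LEMMA for B
lemma B_apply (r t : ℕ) (hr : 2 ≤ r) (i j : Fin (2*r-1)) :
    rowOps r t hr (r-1) i j =
      if r ≤ (i : ℕ) then
        (if (j:ℕ) = (i:ℕ) - r then -(((t:ℚ)+(r:ℚ)+1) * ((t+r).choose r : ℚ)) else 0)
      else sylN r (pPoly r t) (i:ℕ) (j:ℕ) := by
  rw [rowOps_apply r t hr (r-1) le_rfl i j]
  have h : 2*r-1-(r-1) = r := by omega
  simp only [h]

-- determinant of sylvester matrix
lemma det_syl (r t : ℕ) (hr : 2 ≤ r) :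
    (sylvesterWithDeriv r (pPoly r t)).det =
      ((t:ℚ)+1) * ((((t:ℚ)+(r:ℚ)+1) * ((t+r).choose r : ℚ)))^(r-1) := by
  set Kc : ℚ := ((t:ℚ)+(r:ℚ)+1) * ((t+r).choose r : ℚ) with hKc
  set B := rowOps r t hr (r-1) with hB
  set σ := pprod r hr (r-1) with hσ
  have hσap : ∀ (i : Fin (2*r-1)), ((σ i : Fin (2*r-1)) : ℕ) =
      if (i:ℕ) < r-1 then (i:ℕ) + r
      else if r ≤ (i:ℕ) ∧ (i:ℕ) < r + (r-1) then (i:ℕ) - r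
      else (i:ℕ) := pprod_apply r hr (r-1) le_rfl
  have hBapp : ∀ i j : Fin (2*r-1), B i j =
      if r ≤ (i : ℕ) then
        (if (j:ℕ) = (i:ℕ) - r then -Kc else 0)
      else sylN r (pPoly r t) (i:ℕ) (j:ℕ) := B_apply r t hr
  set g : ℕ → ℚ := fun v => if v < r-1 then -Kc else if v = r-1 then (t:ℚ)+1 else 1 with hg
  -- diagonal description
  have hdiag : ∀ i : Fin (2*r-1), B (σ i) i = g ((i:ℕ)) := by
    intro i
    have hi := i.isLt
    rw [hBapp, hg]
    rcases lt_trichotomy ((i:ℕ)) (r-1) with h | h | h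
    · have hv : ((σ i : Fin (2*r-1)) : ℕ) = (i:ℕ) + r := by
        rw [hσap i, if_pos h]
      rw [hv, if_pos (by omega), if_pos (by omega)]
      simp only []
      rw [if_pos h]
    · have hv : ((σ i : Fin (2*r-1)) : ℕ) = (i:ℕ) := by
        rw [hσap i, if_neg (by omega), if_neg (by omega)]
      rw [hv, if_neg (by omega)]
      rw [sylN, if_neg (by omega), if_pos (by omega)]
      have e1 : (i:ℕ) - (r-1) = 0 := by omega
      rw [e1]
      have e2 : r - 1 + 0 - (i:ℕ) = 0 := by omega
      rw [e2, coeff_deriv_pPoly, if_pos (by omega)]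
      simp only []
      rw [if_neg (by omega), if_pos h]
      simp [Nat.choose_one_right]
    · have hv : ((σ i : Fin (2*r-1)) : ℕ) = (i:ℕ) - r := by
        rw [hσap i, if_neg (by omega), if_pos (by omega)]
      rw [hv, if_neg (by omega)]
      rw [sylN, if_pos (by omega), if_pos (by omega)]
      have e1 : r + ((i:ℕ) - r) - (i:ℕ) = 0 := by omega
      rw [e1, coeff_pPoly, if_pos (by omega)]
      simp only []
      rw [if_neg (by omega), if_neg (by omega)]
      simp
  -- lower triangular
  have htri : (B.submatrix σ id).BlockTriangular OrderDual.toDual := by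
    intro i j hij
    have hij' : i < j := hij
    have hi := i.isLt
    have hj := j.isLt
    simp only [Matrix.submatrix_apply, id_eq]
    rw [hBapp]
    have hlt : (i:ℕ) < (j:ℕ) := hij'
    rcases lt_trichotomy ((i:ℕ)) (r-1) with h | h | h
    · have hv : ((σ i : Fin (2*r-1)) : ℕ) = (i:ℕ) + r := by rw [hσap i, if_pos h]
      rw [hv, if_pos (by omega), if_neg (by omega)]
    · have hv : ((σ i : Fin (2*r-1)) : ℕ) = (i:ℕ) := by
        rw [hσap i, if_neg (by omega), if_neg (by omega)]
      rw [hv, if_neg (by omega), sylN, if_neg (by omega), if_neg (by omega)]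
    · have hv : ((σ i : Fin (2*r-1)) : ℕ) = (i:ℕ) - r := by
        rw [hσap i, if_neg (by omega), if_pos (by omega)]
      rw [hv, if_neg (by omega), sylN, if_pos (by omega), if_neg (by omega)]
  have hdet1 : (B.submatrix σ id).det = ∏ i : Fin (2*r-1), B (σ i) i := by
    rw [Matrix.det_of_lowerTriangular _ htri]
    apply Finset.prod_congr rfl
    intro i _
    simp [Matrix.submatrix_apply]
  have hdet2 : (B.submatrix σ id).det = ((Equiv.Perm.sign σ : ℤ) : ℚ) * B.det :=
    Matrix.det_permute σ B
  -- compute the product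
  have hprodval : ∏ i : Fin (2*r-1), B (σ i) i = (-Kc)^(r-1) * ((t:ℚ)+1) := by
    rw [Finset.prod_congr rfl (fun i (_ : i ∈ Finset.univ) => hdiag i)]
    rw [Fin.prod_univ_eq_prod_range g (2*r-1)]
    rw [← Finset.prod_range_mul_prod_Ico g (show r ≤ 2*r-1 by omega)]
    have htail : ∏ v ∈ Finset.Ico r (2*r-1), g v = 1 := by
      apply Finset.prod_eq_one
      intro v hv
      rw [Finset.mem_Ico] at hv
      rw [hg]
      simp only []
      rw [if_neg (by omega), if_neg (by omega)]
    rw [htail, mul_one]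
    have hhead : ∏ v ∈ Finset.range r, g v = (-Kc)^(r-1) * ((t:ℚ)+1) := by
      obtain ⟨s, hs⟩ : ∃ s, r = s + 1 := ⟨r-1, by omega⟩
      have hs1 : r - 1 = s := by omega
      rw [hs, Finset.prod_range_succ]
      simp only [Nat.add_sub_cancel]
      have h1 : ∀ v ∈ Finset.range s, g v = -Kc := by
        intro v hv
        rw [Finset.mem_range] at hv
        rw [hg]
        simp only []
        rw [if_pos (by omega)]
      rw [Finset.prod_congr rfl h1, Finset.prod_const, Finset.card_range]
      have h2 : g s = (t:ℚ)+1 := by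
        rw [hg]
        simp only []
        rw [if_neg (by omega), if_pos (by omega)]
      rw [h2]
    exact hhead
  -- assemble
  have hsign : ((Equiv.Perm.sign σ : ℤ) : ℚ) = (-1)^(r-1) := by
    rw [hσ, pprod_sign]
    push_cast
    ring
  have key := hdet2.symm.trans (hdet1.trans hprodval)
  rw [hsign] at key
  have hBdet : B.det = (sylvesterWithDeriv r (pPoly r t)).det := rowOps_det r t hr (r-1) le_rfl
  rw [hBdet] at key
  have hsq : ((-1:ℚ)^(r-1)) * ((-1:ℚ)^(r-1)) = 1 := by
    rw [← pow_add, ← two_mul, pow_mul]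
    norm_num
  calc (sylvesterWithDeriv r (pPoly r t)).det
      = (((-1:ℚ)^(r-1)) * ((-1:ℚ)^(r-1))) * (sylvesterWithDeriv r (pPoly r t)).det := by
        rw [hsq, one_mul]
    _ = (-1:ℚ)^(r-1) * ((-1:ℚ)^(r-1) * (sylvesterWithDeriv r (pPoly r t)).det) := by ring
    _ = (-1:ℚ)^(r-1) * ((-Kc)^(r-1) * ((t:ℚ)+1)) := by rw [← key]
    _ = ((t:ℚ)+1) * Kc^(r-1) := by
        rw [← mul_assoc, ← mul_pow]
        ring_nf

lemma prod_Icc_factorial (t r : ℕ) : (∏ i ∈ Finset.Icc 1 r, (t+i)) * t.factorial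
    = (t+r).factorial := by
  induction r with
  | zero => simp
  | succ r ih =>
    rw [Finset.prod_Icc_succ_top (by omega)]
    have : t + (r+1) = (t+r) + 1 := by omega
    rw [this, Nat.factorial_succ, mul_comm (∏ i ∈ Finset.Icc 1 r, (t+i)) ((t+r)+1),
      mul_assoc, ih]

lemma prod_Icc_choose (t r : ℕ) :
    (∏ i ∈ Finset.Icc 1 r, (t+i)) = r.factorial * (t+r).choose r := by
  have h1 := prod_Icc_factorial t r
  have h2 := Nat.choose_mul_factorial_mul_factorial (show r ≤ t + r by omega)
  have h3 : t + r - r = t := by omega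
  rw [h3] at h2
  have ht : 0 < t.factorial := Nat.factorial_pos t
  nlinarith [h1, h2]

/-- The discriminant of `p_{r,t}`, which has degree `r` and leading coefficient
`C(t+r, r)`, computed as `(-1)^{r(r-1)/2} / c * Res(f, f')`. -/
theorem discriminant_pPoly (r t : ℕ) (hr : 2 ≤ r) :
    (-1 : ℚ) ^ (r * (r - 1) / 2) / (Nat.choose (t + r) r : ℚ) * resWithDeriv r (pPoly r t) =
      (-1 : ℚ) ^ (r * (r - 1) / 2) *
        ((t : ℚ) + 1) ^ (r - 1) * ((t : ℚ) + (r : ℚ) + 1) ^ (r - 1) *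
        (∏ i ∈ Finset.Icc 2 r, ((t : ℚ) + (i : ℚ))) ^ (r - 2) /
        ((Nat.factorial r : ℚ)) ^ (r - 2) := by
  set c : ℚ := ((t+r).choose r : ℚ) with hc
  set P : ℚ := ∏ i ∈ Finset.Icc 2 r, ((t : ℚ) + (i : ℚ)) with hP
  have hc0 : c ≠ 0 := by
    rw [hc]
    exact Nat.cast_ne_zero.mpr (Nat.choose_pos (show r ≤ t + r by omega)).ne'
  have hF0 : ((r.factorial : ℚ)) ≠ 0 := by
    exact_mod_cast Nat.cast_ne_zero.mpr (Nat.factorial_pos r).ne'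
  have ht0 : ((t:ℚ)+1) ≠ 0 := by positivity
  -- key product identity: (t+1) * P = r! * c
  have hkey : ((t:ℚ)+1) * P = (r.factorial : ℚ) * c := by
    have hnat := prod_Icc_choose t r
    have hsplit : (Finset.Icc 1 r) = insert 1 (Finset.Icc 2 r) := by
      ext x
      simp only [Finset.mem_Icc, Finset.mem_insert]
      omega
    have h1 : (1:ℕ) ∉ Finset.Icc 2 r := by simp
    rw [hsplit, Finset.prod_insert h1] at hnat
    have := congrArg (fun n : ℕ => (n : ℚ)) hnat
    push_cast at this
    rw [hP, hc]
    push_cast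
    convert this using 2
  have hres : resWithDeriv r (pPoly r t) = ((t:ℚ)+1) * ((((t:ℚ)+(r:ℚ)+1) * c))^(r-1) :=
    det_syl r t hr
  rw [hres, mul_pow]
  have hr1 : r - 1 = (r-2) + 1 := by omega
  have hcpow : c^(r-1) = c^(r-2) * c := by rw [hr1, pow_succ]
  have htpow : ((t:ℚ)+1)^(r-1) = ((t:ℚ)+1)^(r-2) * ((t:ℚ)+1) := by rw [hr1, pow_succ]
  have hPkey : (((t:ℚ)+1) * P)^(r-2) = ((r.factorial:ℚ) * c)^(r-2) := by rw [hkey]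
  rw [mul_pow, mul_pow] at hPkey
  rw [hcpow, htpow]
  field_simp
  linear_combination (-1:ℚ) * hPkey
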